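/- Let M ≥ 2, let v_1, …, v_M and f be unit vectors in a complex inner product space, and let c > 0 satisfy |⟨v_i, f⟩|² ≥ c for all i = 1, …, M. Then max over pairs i ≠ j of |⟨v_i, v_j⟩| is at least (M·c − 1)/(M − 1). -/

import Mathlib

/-- Lemma 2 (spherical codes): if `M ≥ 2` unit vectors `v i` all satisfy
`|⟨v i, f⟩|² ≥ c > 0` for a unit vector `f`, then some pair `i ≠ j` has
`|⟨v i, v j⟩| ≥ (Mc − 1)/(M − 1)`. -/
theorem stmt0 {E : Type*} [NormedAddCommGroup E] [InnerProductSpace ℂ E]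
    (M : ℕ) (hM : 2 ≤ M) (v : Fin M → E) (f : E) (c : ℝ) (hc : 0 < c)
    (hv : ∀ i, ‖v i‖ = 1) (hf : ‖f‖ = 1)
    (hvf : ∀ i, c ≤ ‖(inner ℂ (v i) f : ℂ)‖ ^ 2) :
    ∃ i j, i ≠ j ∧ ((M : ℝ) * c - 1) / ((M : ℝ) - 1) ≤ ‖(inner ℂ (v i) (v j) : ℂ)‖ := by
  classical
  set a : Fin M → ℝ := fun i => ‖(inner ℂ (v i) f : ℂ)‖ with ha
  set C : ℝ := ∑ i, a i ^ 2 with hCdef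
  set B : ℝ := ∑ i, a i with hBdef
  -- the set of off-diagonal pairs
  have hPne : (Finset.univ.filter (fun p : Fin M × Fin M => p.1 ≠ p.2)).Nonempty := by
    refine ⟨(⟨0, by omega⟩, ⟨1, by omega⟩), ?_⟩
    simp [Fin.ext_iff]
  obtain ⟨p, hpP, hpt⟩ := Finset.exists_mem_eq_sup'
    (s := Finset.univ.filter (fun p : Fin M × Fin M => p.1 ≠ p.2)) hPne
    (fun p => ‖(inner ℂ (v p.1) (v p.2) : ℂ)‖)
  have hpne : p.1 ≠ p.2 := by simpa using hpP
  refine ⟨p.1, p.2, hpne, ?_⟩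
  set t : ℝ := ‖(inner ℂ (v p.1) (v p.2) : ℂ)‖ with ht
  have ht0 : 0 ≤ t := norm_nonneg _
  have htub : ∀ i j : Fin M, i ≠ j → ‖(inner ℂ (v i) (v j) : ℂ)‖ ≤ t := by
    intro i j hij
    refine le_of_le_of_eq ?_ hpt
    exact Finset.le_sup' (fun p : Fin M × Fin M => ‖(inner ℂ (v p.1) (v p.2) : ℂ)‖)
      (by simp [hij] : ((i, j) : Fin M × Fin M) ∈ _)
  -- step 1 : Mc ≤ C
  have hC : (M : ℝ) * c ≤ C := by
    calc (M : ℝ) * c = ∑ _i : Fin M, c := by simp [mul_comm]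
    _ ≤ C := Finset.sum_le_sum fun i _ => hvf i
  have hCpos : 0 < C := lt_of_lt_of_le (by positivity) hC
  -- the auxiliary vector s
  set s : E := ∑ i, (inner ℂ (v i) f : ℂ) • v i with hs
  -- step 2 : C ≤ ‖s‖
  have hfs : (inner ℂ f s : ℂ) = (C : ℝ) := by
    rw [hs, inner_sum]
    push_cast [hCdef]
    refine Finset.sum_congr rfl fun i _ => ?_
    rw [inner_smul_right, ← inner_conj_symm f (v i), Complex.mul_conj']
  have hCs : C ≤ ‖s‖ := by
    have h := norm_inner_le_norm (𝕜 := ℂ) f s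
    rw [hfs, hf, one_mul] at h
    calc C ≤ ‖(C : ℂ)‖ := by simp [abs_of_pos hCpos]
    _ ≤ ‖s‖ := h
  -- step 3 : ‖s‖ ^ 2 ≤ C + t * (B ^ 2 - C)
  have hBC : ∑ i, ∑ j ∈ Finset.univ.erase i, a i * a j = B ^ 2 - C := by
    have : ∀ i : Fin M, ∑ j ∈ Finset.univ.erase i, a i * a j
        = a i * B - a i ^ 2 := by
      intro i
      rw [← Finset.mul_sum, Finset.sum_erase_eq_sub (Finset.mem_univ i)]
      rw [← hBdef]
      ring_nf
    rw [Finset.sum_congr rfl fun i _ => this i, Finset.sum_sub_distrib,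
      ← Finset.sum_mul, ← hBdef, ← hCdef]
    ring
  have hnorm : ‖s‖ ^ 2 ≤ C + t * (B ^ 2 - C) := by
    have h1 : (‖s‖ : ℝ) ^ 2 = Complex.re (inner ℂ s s : ℂ) := by
      rw [← inner_self_eq_norm_sq (𝕜 := ℂ)]
      rfl
    have h2 : (inner ℂ s s : ℂ) = ∑ i, ∑ j,
        (starRingEnd ℂ) (inner ℂ (v i) f : ℂ) * (inner ℂ (v j) f : ℂ)
          * (inner ℂ (v i) (v j) : ℂ) := by
      rw [hs, sum_inner]
      refine Finset.sum_congr rfl fun i _ => ?_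
      rw [inner_sum]
      refine Finset.sum_congr rfl fun j _ => ?_
      rw [inner_smul_left, inner_smul_right]
      ring
    have h3 : ‖s‖ ^ 2 ≤ ∑ i, ∑ j, a i * a j * ‖(inner ℂ (v i) (v j) : ℂ)‖ := by
      rw [h1, h2]
      calc Complex.re (∑ i, ∑ j, (starRingEnd ℂ) (inner ℂ (v i) f : ℂ)
            * (inner ℂ (v j) f : ℂ) * (inner ℂ (v i) (v j) : ℂ))
          ≤ ‖∑ i : Fin M, ∑ j : Fin M, (starRingEnd ℂ) (inner ℂ (v i) f : ℂ)
            * (inner ℂ (v j) f : ℂ) * (inner ℂ (v i) (v j) : ℂ)‖ :=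
            Complex.re_le_norm _
        _ ≤ ∑ i, ∑ j, ‖(starRingEnd ℂ) (inner ℂ (v i) f : ℂ)
            * (inner ℂ (v j) f : ℂ) * (inner ℂ (v i) (v j) : ℂ)‖ := by
            refine (norm_sum_le _ _).trans (Finset.sum_le_sum fun i _ => norm_sum_le _ _)
        _ = ∑ i, ∑ j, a i * a j * ‖(inner ℂ (v i) (v j) : ℂ)‖ := by
            refine Finset.sum_congr rfl fun i _ => Finset.sum_congr rfl fun j _ => ?_
            rw [norm_mul, norm_mul, RCLike.norm_conj]
    refine h3.trans ?_
    have hsplit : ∀ i : Fin M, ∑ j, a i * a j * ‖(inner ℂ (v i) (v j) : ℂ)‖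
        = a i ^ 2 + ∑ j ∈ Finset.univ.erase i, a i * a j * ‖(inner ℂ (v i) (v j) : ℂ)‖ := by
      intro i
      rw [← Finset.add_sum_erase _ _ (Finset.mem_univ i)]
      congr 1
      rw [inner_self_eq_norm_sq_to_K, ha]
      simp [hv i]
      ring
    calc ∑ i, ∑ j, a i * a j * ‖(inner ℂ (v i) (v j) : ℂ)‖
        = C + ∑ i, ∑ j ∈ Finset.univ.erase i, a i * a j * ‖(inner ℂ (v i) (v j) : ℂ)‖ := by
          rw [Finset.sum_congr rfl fun i _ => hsplit i, Finset.sum_add_distrib, ← hCdef]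
      _ ≤ C + ∑ i, ∑ j ∈ Finset.univ.erase i, a i * a j * t := by
          gcongr with i _ j hj
          · exact htub i j (fun h => (Finset.mem_erase.mp hj).1 h.symm)
      _ = C + t * (B ^ 2 - C) := by
          rw [← hBC]
          rw [Finset.mul_sum]
          congr 1
          refine Finset.sum_congr rfl fun i _ => ?_
          rw [Finset.mul_sum]
          exact Finset.sum_congr rfl fun j _ => by ring
  -- step 4 : B ^ 2 ≤ M * C
  have hB2 : B ^ 2 ≤ (M : ℝ) * C := by
    have h := sq_sum_le_card_mul_sum_sq (s := Finset.univ) (f := a)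
    simpa [hBdef, hCdef] using h
  -- combine
  have key : C ^ 2 ≤ C + t * ((M : ℝ) - 1) * C := by
    calc C ^ 2 ≤ ‖s‖ ^ 2 := by
          have := hCs
          nlinarith [norm_nonneg s]
      _ ≤ C + t * (B ^ 2 - C) := hnorm
      _ ≤ C + t * ((M : ℝ) * C - C) := by nlinarith [hB2, ht0]
      _ = C + t * ((M : ℝ) - 1) * C := by ring
  have hCle : C ≤ 1 + t * ((M : ℝ) - 1) := by
    nlinarith
  have hM1 : (0 : ℝ) < (M : ℝ) - 1 := by
    have : (2 : ℝ) ≤ (M : ℝ) := by exact_mod_cast hM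
    linarith
  rw [div_le_iff₀ hM1]
  nlinarith
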